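/- Let (Q, f) be a triangulation quiver with at least three vertices, and let β be an arrow with n_β = 3 and n_{β̄} = 3. Then β and β̄ are not a double arrow, i.e., t(β) ≠ t(β̄). (Step in the proof of Lemma 6.6, implication (iv) ⇒ (i).) -/

import Mathlib

/-- A triangulation quiver: a finite connected 2-regular quiver `(V, A, s, t)` together
with a permutation `f` of the arrows satisfying `s (f a) = t a` and `f ∘ f ∘ f = id`.
The field `bar` records, for each arrow `a`, the unique arrow `ᾱ ≠ α` with the same
source (it exists and is unique by 2-regularity), together with its defining properties. -/
structure TriangulationQuiver where
  V : Type
  A : Type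
  fintypeV : Fintype V
  fintypeA : Fintype A
  s : A → V
  t : A → V
  two_regular_src : ∀ v : V, Set.ncard {a : A | s a = v} = 2
  two_regular_tgt : ∀ v : V, Set.ncard {a : A | t a = v} = 2
  connected : ∀ u v : V,
    Relation.ReflTransGen (fun x y => ∃ a : A, (s a = x ∧ t a = y) ∨ (s a = y ∧ t a = x)) u v
  f : A → A
  f_cube : ∀ a : A, f (f (f a)) = a
  s_f : ∀ a : A, s (f a) = t a
  bar : A → A
  bar_src : ∀ a : A, s (bar a) = s a
  bar_ne : ∀ a : A, bar a ≠ a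
  bar_unique : ∀ a b : A, s b = s a → b ≠ a → b = bar a

attribute [instance] TriangulationQuiver.fintypeV TriangulationQuiver.fintypeA

namespace TriangulationQuiver

variable (Q : TriangulationQuiver)

/-- The second permutation of arrows: `g α = \overline{f α}`. -/
def g (a : Q.A) : Q.A := Q.bar (Q.f a)

/-- The `g`-orbit of an arrow. -/
def gOrbit (a : Q.A) : Set Q.A := {b : Q.A | ∃ k : ℕ, Q.g^[k] a = b}

/-- `n α` is the number of arrows in the `g`-orbit of `α`. -/
noncomputable def n (a : Q.A) : ℕ := (Q.gOrbit a).ncard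

end TriangulationQuiver

namespace TriangulationQuiver

lemma bar_bar (Q : TriangulationQuiver) (a : Q.A) : Q.bar (Q.bar a) = a :=
  (Q.bar_unique (Q.bar a) a (Q.bar_src a).symm (Ne.symm (Q.bar_ne a))).symm

lemma f_inj (Q : TriangulationQuiver) : Function.Injective Q.f := by
  intro x y h
  have := congrArg (fun z => Q.f (Q.f z)) h
  simpa [Q.f_cube] using this

lemma g_inj (Q : TriangulationQuiver) : Function.Injective Q.g := by
  intro x y h
  have hb : Q.f x = Q.f y := by
    have := congrArg Q.bar h
    simpa [TriangulationQuiver.g, Q.bar_bar] using this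
  exact Q.f_inj hb

lemma g_cube_of_n_eq_three (Q : TriangulationQuiver) (a : Q.A) (ha : Q.n a = 3) :
    Q.g^[3] a = a := by
  -- a is a periodic point of g
  have hper : a ∈ Function.periodicPts Q.g := by
    obtain ⟨i, j, hij, heq⟩ := Finite.exists_ne_map_eq_of_infinite (fun k : ℕ => Q.g^[k] a)
    rcases lt_or_gt_of_ne hij with hlt | hlt
    · refine ⟨j - i, by omega, ?_⟩
      have hinj : Function.Injective (Q.g^[i]) := Q.g_inj.iterate i
      apply hinj
      rw [← Function.iterate_add_apply]
      rw [show i + (j - i) = j by omega]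
      exact heq.symm
    · refine ⟨i - j, by omega, ?_⟩
      have hinj : Function.Injective (Q.g^[j]) := Q.g_inj.iterate j
      apply hinj
      rw [← Function.iterate_add_apply]
      rw [show j + (i - j) = i by omega]
      exact heq
  set m := Function.minimalPeriod Q.g a with hm
  have hmpos : 0 < m := Function.minimalPeriod_pos_of_mem_periodicPts hper
  have horb : Q.gOrbit a = (fun k => Q.g^[k] a) '' Set.Iio m := by
    ext x
    constructor
    · rintro ⟨k, rfl⟩
      exact ⟨k % m, Nat.mod_lt _ hmpos, Function.iterate_mod_minimalPeriod_eq⟩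
    · rintro ⟨k, _, rfl⟩
      exact ⟨k, rfl⟩
  have hcard : (Q.gOrbit a).ncard = m := by
    rw [horb, Set.ncard_image_of_injOn Function.iterate_injOn_Iio_minimalPeriod]
    simp [Set.ncard_eq_toFinset_card', Nat.card_coe_set_eq]
    exact hm.symm
  have hm3 : m = 3 := by
    rw [← hcard]; exact ha
  rw [← hm3]
  exact Function.iterate_minimalPeriod

end TriangulationQuiver

/-- Step in the proof of Lemma 6.6, (iv) ⇒ (i): in a triangulation quiver with at least
three vertices, for an arrow `β` with `n_β = 3` and `n_{β̄} = 3`, the arrows `β` and `β̄`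
are not a double arrow, i.e. `t(β) ≠ t(β̄)`. -/
theorem stmt_6 (Q : TriangulationQuiver) (h3 : 3 ≤ Fintype.card Q.V)
    (b : Q.A) (hb : Q.n b = 3) (hbb : Q.n (Q.bar b) = 3) :
    Q.t b ≠ Q.t (Q.bar b) := by
  intro h
  have hg3 : Q.g^[3] b = b := Q.g_cube_of_n_eq_three b hb
  -- g b = f (bar b)
  have hfne : Q.f (Q.bar b) ≠ Q.f b := fun he => Q.bar_ne b (Q.f_inj he)
  have h1 : Q.g b = Q.f (Q.bar b) :=
    (Q.bar_unique (Q.f b) (Q.f (Q.bar b)) (by rw [Q.s_f, Q.s_f, h]) hfne).symm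
  have h2 : Q.g^[3] b = Q.bar (Q.f (Q.bar (Q.f (Q.f (Q.bar b))))) := by
    show Q.g (Q.g (Q.g b)) = _
    rw [h1]
    rfl
  rw [hg3] at h2
  -- so f (bar (f (f (bar b)))) = bar b
  have h4 : Q.f (Q.bar (Q.f (Q.f (Q.bar b)))) = Q.bar b := by
    have := congrArg Q.bar h2
    rw [Q.bar_bar] at this
    exact this.symm
  have h5 : Q.bar (Q.f (Q.f (Q.bar b))) = Q.f (Q.f (Q.bar b)) := by
    have := congrArg (fun z => Q.f (Q.f z)) h4
    simpa [Q.f_cube] using this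
  exact Q.bar_ne _ h5
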